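/- arXiv:math/0309402 — 3 statements merged into one kernel-verified Lean document; each statement's English description precedes it below -/
import Mathlib

section
/- Let ℰ be a right 𝒜-module with a strongly non-degenerate 𝒜-valued inner product ⟨·,·⟩ (i.e., x ↦ ⟨x,·⟩ is a bijection onto Hom_𝒜(ℰ,𝒜)). Then for any other 𝒜-valued inner product ⟨·,·⟩' on ℰ there exists a unique adjointable endomorphism H of ℰ with H = H* such that ⟨x,y⟩' = ⟨x, Hy⟩ for all x, y. -/
/-- on a right `𝒜`-module with a strongly non-degenerate inner product
`⟨·,·⟩`, any other inner product `⟨·,·⟩'` is represented by a unique hermitian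
adjointable endomorphism `H`: `⟨x,y⟩' = ⟨x, Hy⟩`. Right modules are encoded as
modules over `Aᵐᵒᵖ`, and right-`𝒜`-linear maps as plain functions with the
appropriate properties. -/
theorem stmt_6 {A E : Type*} [Ring A] [StarRing A] [AddCommGroup E] [Module Aᵐᵒᵖ E]
    (ip ip' : E → E → A)
    (herm : ∀ x y, ip x y = star (ip y x))
    (add2 : ∀ x y z, ip x (y + z) = ip x y + ip x z)
    (lin2 : ∀ x y (a : A), ip x (MulOpposite.op a • y) = ip x y * a)
    (herm' : ∀ x y, ip' x y = star (ip' y x))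
    (add2' : ∀ x y z, ip' x (y + z) = ip' x y + ip' x z)
    (lin2' : ∀ x y (a : A), ip' x (MulOpposite.op a • y) = ip' x y * a)
    -- strong non-degeneracy of `ip`: `x ↦ ⟨x,·⟩` is a bijection onto `Hom_𝒜(ℰ,𝒜)`
    (hinj : ∀ x x' : E, (∀ y, ip x y = ip x' y) → x = x')
    (hsurj : ∀ f : E → A, (∀ y z, f (y + z) = f y + f z) →
      (∀ (a : A) y, f (MulOpposite.op a • y) = f y * a) → ∃ x, ∀ y, f y = ip x y) :
    ∃! H : E → E,
      (∀ y z, H (y + z) = H y + H z) ∧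
      (∀ (a : A) y, H (MulOpposite.op a • y) = MulOpposite.op a • H y) ∧
      (∀ x y, ip x (H y) = ip (H x) y) ∧
      (∀ x y, ip' x y = ip x (H y)) := by
  -- for each x, pick H x with ip' x y = ip (H x) y for all y
  have hex : ∀ x : E, ∃ z : E, ∀ y, ip' x y = ip z y := fun x =>
    hsurj (ip' x) (add2' x) (fun a y => lin2' x y a)
  choose H hH using hex
  -- additivity of ip in first slot
  have add1 : ∀ x y z, ip (x + y) z = ip x z + ip y z := by
    intro x y z
    rw [herm, add2, star_add, ← herm, ← herm]
  have add1' : ∀ x y z, ip' (x + y) z = ip' x z + ip' y z := by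
    intro x y z
    rw [herm', add2', star_add, ← herm', ← herm']
  have lin1 : ∀ x y (a : A), ip (MulOpposite.op a • x) y = star a * ip x y := by
    intro x y a
    rw [herm, lin2, star_mul, ← herm]
  have lin1' : ∀ x y (a : A), ip' (MulOpposite.op a • x) y = star a * ip' x y := by
    intro x y a
    rw [herm', lin2', star_mul, ← herm']
  -- key: ip x (H y) = ip' x y
  have key : ∀ x y, ip x (H y) = ip' x y := by
    intro x y
    rw [herm, ← hH y x, ← herm']
  refine ⟨H, ⟨?_, ?_, ?_, ?_⟩, ?_⟩
  · intro y z
    apply hinj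
    intro w
    rw [← hH, add1', add1, hH, hH]
  · intro a y
    apply hinj
    intro w
    rw [← hH, lin1', lin1, hH]
  · intro x y
    rw [key, ← hH, herm', ← key, ← herm]
  · intro x y
    exact (key x y).symm
  · intro H' ⟨_, _, _, hrep⟩
    funext y
    apply hinj
    intro w
    rw [herm, ← hrep, ← herm', hH]
end

section
/- Let 𝒜₁, 𝒜₂ be *-algebras and ℰ₁, ℰ₂ right modules with completely positive inner products ⟨·,·⟩₁, ⟨·,·⟩₂ respectively. Then the external tensor product inner product on ℰ₁ ⊗_C ℰ₂ over 𝒜₁ ⊗_C 𝒜₂, determined by ⟨x₁⊗x₂, y₁⊗y₂⟩ = ⟨x₁,y₁⟩₁ ⊗ ⟨x₂,y₂⟩₂, is completely positive. -/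
/-- `c ∈ C` is a nonnegative real. -/
def NonnegC (R : Type*) {C : Type*} [CommRing R] [LinearOrder R] [IsStrictOrderedRing R] [CommRing C]
    [Algebra R C] (c : C) : Prop :=
  ∃ r : R, 0 ≤ r ∧ c = algebraMap R C r

/-- positivity of an algebra element via positive linear functionals -/
def IsPosElem (R : Type*) (C : Type*) {A : Type*} [CommRing R] [LinearOrder R] [IsStrictOrderedRing R]
    [CommRing C] [Algebra R C] [NonUnitalRing A] [StarRing A] [Module C A]
    (a : A) : Prop :=
  ∀ ω : A →ₗ[C] C, (∀ b : A, NonnegC R (ω (star b * b))) → NonnegC R (ω a)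

lemma nonnegC_zero {R C : Type*} [CommRing R] [LinearOrder R] [IsStrictOrderedRing R] [CommRing C]
    [Algebra R C] : NonnegC R (0 : C) :=
  ⟨0, le_refl _, by simp⟩

lemma nonnegC_add {R C : Type*} [CommRing R] [LinearOrder R] [IsStrictOrderedRing R] [CommRing C]
    [Algebra R C] {c d : C} (hc : NonnegC R c) (hd : NonnegC R d) :
    NonnegC R (c + d) := by
  obtain ⟨r, hr, rfl⟩ := hc
  obtain ⟨s, hs, rfl⟩ := hd
  exact ⟨r + s, add_nonneg hr hs, by simp [map_add]⟩

lemma nonnegC_sum {R C : Type*} [CommRing R] [LinearOrder R] [IsStrictOrderedRing R] [CommRing C]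
    [Algebra R C] {ι : Type*} (s : Finset ι) (f : ι → C)
    (h : ∀ i ∈ s, NonnegC R (f i)) : NonnegC R (∑ i ∈ s, f i) :=
  Finset.sum_induction f _ (fun _ _ => nonnegC_add) nonnegC_zero h

lemma sum_swap4 {M : Type*} [AddCommMonoid M] {ι κ : Type*} [Fintype ι] [Fintype κ]
    (f : ι → ι → κ → κ → M) :
    ∑ i, ∑ j, ∑ p, ∑ q, f i j p q = ∑ p, ∑ q, ∑ i, ∑ j, f i j p q := by
  calc ∑ i, ∑ j, ∑ p, ∑ q, f i j p q
      = ∑ i, ∑ p, ∑ j, ∑ q, f i j p q :=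
        Finset.sum_congr rfl fun i _ => Finset.sum_comm
    _ = ∑ p, ∑ i, ∑ j, ∑ q, f i j p q := Finset.sum_comm
    _ = ∑ p, ∑ i, ∑ q, ∑ j, f i j p q :=
        Finset.sum_congr rfl fun p _ => Finset.sum_congr rfl fun i _ =>
          Finset.sum_comm
    _ = ∑ p, ∑ q, ∑ i, ∑ j, f i j p q :=
        Finset.sum_congr rfl fun p _ => Finset.sum_comm

open TensorProduct in
/-- the external tensor product of completely positive inner products
is completely positive.  The `*`-algebra structure on `A₁ ⊗_C A₂` is the tensor
product one; its involution `st` (determined by `st (a ⊗ b) = a* ⊗ b*`) is supplied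
as data.  An element `Φ^α` of `ℰ₁ ⊗_C ℰ₂` is represented as `Σᵢ x₁ᵢ^α ⊗ x₂ᵢ^α`, and
the matrix of external-tensor inner products of the `Φ^α` is positive: every
positive `C`-linear functional on `Mₙ(A₁ ⊗ A₂)` is nonnegative on it. -/
theorem stmt_9 {R C A₁ A₂ E₁ E₂ : Type*} [CommRing R] [LinearOrder R] [IsStrictOrderedRing R] [CommRing C]
    [StarRing C] [Algebra R C] [Ring A₁] [StarRing A₁] [Algebra C A₁]
    [Ring A₂] [StarRing A₂] [Algebra C A₂]
    [AddCommGroup E₁] [AddCommGroup E₂]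
    (sm₁ : E₁ → A₁ → E₁) (ip₁ : E₁ → E₁ → A₁)
    (sm₂ : E₂ → A₂ → E₂) (ip₂ : E₂ → E₂ → A₂)
    -- inner product axioms
    (herm₁ : ∀ x y, ip₁ x y = star (ip₁ y x))
    (add₁ : ∀ x y z, ip₁ x (y + z) = ip₁ x y + ip₁ x z)
    (lin₁ : ∀ x y a, ip₁ x (sm₁ y a) = ip₁ x y * a)
    (herm₂ : ∀ x y, ip₂ x y = star (ip₂ y x))
    (add₂ : ∀ x y z, ip₂ x (y + z) = ip₂ x y + ip₂ x z)
    (lin₂ : ∀ x y a, ip₂ x (sm₂ y a) = ip₂ x y * a)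
    -- complete positivity of both inner products
    (cp₁ : ∀ (k : ℕ) (x : Fin k → E₁),
      IsPosElem R C (Matrix.of fun α β => ip₁ (x α) (x β)))
    (cp₂ : ∀ (k : ℕ) (x : Fin k → E₂),
      IsPosElem R C (Matrix.of fun α β => ip₂ (x α) (x β)))
    -- the involution of the tensor product `*`-algebra `A₁ ⊗[C] A₂`
    (st : A₁ ⊗[C] A₂ → A₁ ⊗[C] A₂)
    (hst : ∀ (a : A₁) (b : A₂), st (a ⊗ₜ[C] b) = star a ⊗ₜ[C] star b)
    (hstadd : ∀ u v, st (u + v) = st u + st v)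
    (hstinv : ∀ u, st (st u) = u)
    (hstmul : ∀ u v, st (u * v) = st v * st u)
    (n N : ℕ) (x₁ : Fin n → Fin N → E₁) (x₂ : Fin n → Fin N → E₂) :
    ∀ ω : Matrix (Fin n) (Fin n) (A₁ ⊗[C] A₂) →ₗ[C] C,
      (∀ U : Matrix (Fin n) (Fin n) (A₁ ⊗[C] A₂),
        NonnegC R (ω ((Matrix.of fun i j => st (U j i)) * U))) →
      NonnegC R (ω (Matrix.of fun α β =>
        ∑ i, ∑ j, ip₁ (x₁ α i) (x₁ β j) ⊗ₜ[C] ip₂ (x₂ α i) (x₂ β j))) := by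
  intro ω hω
  rcases Nat.eq_zero_or_pos n with hn | hn
  · subst hn
    have h0 : (Matrix.of fun α β =>
        ∑ i, ∑ j, ip₁ (x₁ α i) (x₁ β j) ⊗ₜ[C] ip₂ (x₂ α i) (x₂ β j))
        = ((Matrix.of fun i j => st ((0 : Matrix (Fin 0) (Fin 0) (A₁ ⊗[C] A₂)) j i)) * 0) := by
      ext α β
      exact α.elim0
    rw [h0]
    exact hω 0
  -- auxiliary: `st` of zero and of sums
  have st0 : st 0 = 0 := by
    have h := hstadd 0 0
    rw [add_zero] at h
    exact (left_eq_add.mp h)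
  have stsum : ∀ {ι : Type} (s : Finset ι) (f : ι → A₁ ⊗[C] A₂),
      st (∑ i ∈ s, f i) = ∑ i ∈ s, st (f i) := by
    intro ι s f
    exact map_sum (AddMonoidHom.mk' st hstadd) f s
  -- packing `Fin n × Fin N` into `Fin (n * N)`
  set z : Fin n := ⟨0, hn⟩ with hz
  set pack : Fin n → Fin N → Fin (n * N) := fun α i => finProdFinEquiv (α, i) with hpack
  set x₁' : Fin (n * N) → E₁ :=
    fun p => x₁ (finProdFinEquiv.symm p).1 (finProdFinEquiv.symm p).2 with hx₁'
  set x₂' : Fin (n * N) → E₂ :=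
    fun p => x₂ (finProdFinEquiv.symm p).1 (finProdFinEquiv.symm p).2 with hx₂'
  have hsymm : ∀ (α : Fin n) (i : Fin N),
      finProdFinEquiv.symm (pack α i) = (α, i) := fun α i =>
    Equiv.symm_apply_apply _ _
  have hx₁ : ∀ α i, x₁' (pack α i) = x₁ α i := by
    intro α i
    simp only [hx₁']
    rw [hsymm]
  have hx₂ : ∀ α i, x₂' (pack α i) = x₂ α i := by
    intro α i
    simp only [hx₂']
    rw [hsymm]
  -- the induced functional on `M_{nN}(A₂)`
  set Ω₂ : Matrix (Fin (n * N)) (Fin (n * N)) A₂ →ₗ[C] C :=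
    { toFun := fun Y => ω (Matrix.of fun α β =>
        ∑ i, ∑ j, ip₁ (x₁ α i) (x₁ β j) ⊗ₜ[C] Y (pack α i) (pack β j))
      map_add' := by
        intro Y Z
        rw [← map_add]
        refine congrArg ω ?_
        ext α β
        simp [Matrix.add_apply, tmul_add, Finset.sum_add_distrib]
      map_smul' := by
        intro c Y
        rw [RingHom.id_apply, ← map_smul]
        refine congrArg ω ?_
        ext α β
        simp [Matrix.smul_apply, tmul_smul, Finset.smul_sum] } with hΩ₂
  have hΩ₂app : ∀ Y, Ω₂ Y = ω (Matrix.of fun α β =>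
      ∑ i, ∑ j, ip₁ (x₁ α i) (x₁ β j) ⊗ₜ[C] Y (pack α i) (pack β j)) :=
    fun Y => rfl
  -- positivity of Ω₂
  have key₂ : ∀ Y : Matrix (Fin (n * N)) (Fin (n * N)) A₂,
      NonnegC R (Ω₂ (star Y * Y)) := by
    intro Y
    -- the induced functional on `M_{nN}(A₁)` (depending on Y)
    set Ω₁ : Matrix (Fin (n * N)) (Fin (n * N)) A₁ →ₗ[C] C :=
      { toFun := fun X => ω (Matrix.of fun α β =>
          ∑ i, ∑ j, X (pack α i) (pack β j) ⊗ₜ[C] (star Y * Y) (pack α i) (pack β j))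
        map_add' := by
          intro X Z
          rw [← map_add]
          refine congrArg ω ?_
          ext α β
          simp [Matrix.add_apply, add_tmul, Finset.sum_add_distrib]
        map_smul' := by
          intro c X
          rw [RingHom.id_apply, ← map_smul]
          refine congrArg ω ?_
          ext α β
          simp [Matrix.smul_apply, smul_tmul', Finset.smul_sum] } with hΩ₁
    have hΩ₁app : ∀ X, Ω₁ X = ω (Matrix.of fun α β =>
        ∑ i, ∑ j, X (pack α i) (pack β j) ⊗ₜ[C] (star Y * Y) (pack α i) (pack β j)) :=
      fun X => rfl
    -- positivity of Ω₁ : the core computation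
    have key₁ : ∀ X : Matrix (Fin (n * N)) (Fin (n * N)) A₁,
        NonnegC R (Ω₁ (star X * X)) := by
      intro X
      set U : Fin (n * N) → Fin (n * N) → Matrix (Fin n) (Fin n) (A₁ ⊗[C] A₂) :=
        fun p q => Matrix.of fun m β =>
          if m = z then ∑ j, X p (pack β j) ⊗ₜ[C] Y q (pack β j) else 0 with hU
      have hentry : ∀ p q α β,
          ((Matrix.of fun i j => st (U p q j i)) * U p q) α β
          = ∑ i, ∑ j, (star (X p (pack α i)) * X p (pack β j)) ⊗ₜ[C]
              (star (Y q (pack α i)) * Y q (pack β j)) := by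
        intro p q α β
        rw [Matrix.mul_apply]
        rw [Finset.sum_eq_single z]
        · simp only [Matrix.of_apply, hU, eq_self_iff_true, if_true]
          have hstv : st (∑ i, X p (pack α i) ⊗ₜ[C] Y q (pack α i))
              = ∑ i, star (X p (pack α i)) ⊗ₜ[C] star (Y q (pack α i)) := by
            rw [stsum]
            exact Finset.sum_congr rfl fun i _ => hst _ _
          rw [hstv, Finset.sum_mul_sum]
          exact Finset.sum_congr rfl fun i _ => Finset.sum_congr rfl fun j _ =>
            Algebra.TensorProduct.tmul_mul_tmul _ _ _ _
        · intro m _ hm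
          simp [hU, hm, st0]
        · intro h
          exact absurd (Finset.mem_univ z) h
      have hsum : (Matrix.of fun α β : Fin n =>
          ∑ i, ∑ j, (star X * X) (pack α i) (pack β j) ⊗ₜ[C]
            (star Y * Y) (pack α i) (pack β j))
          = ∑ p, ∑ q, (Matrix.of fun i j => st (U p q j i)) * U p q := by
        ext α β
        simp only [Matrix.of_apply, Matrix.sum_apply]
        have rhs : ∀ p q, ((Matrix.of fun i j => st (U p q j i)) * U p q) α β
            = ∑ i, ∑ j, (star (X p (pack α i)) * X p (pack β j)) ⊗ₜ[C]
                (star (Y q (pack α i)) * Y q (pack β j)) := fun p q => hentry p q α β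
        simp only [rhs]
        rw [← sum_swap4]
        refine Finset.sum_congr rfl fun i _ => Finset.sum_congr rfl fun j _ => ?_
        rw [Matrix.mul_apply, Matrix.mul_apply, sum_tmul]
        refine Finset.sum_congr rfl fun p _ => ?_
        rw [tmul_sum]
        refine Finset.sum_congr rfl fun q _ => ?_
        rw [Matrix.star_apply, Matrix.star_apply]
      rw [hΩ₁app, hsum, map_sum]
      refine nonnegC_sum _ _ fun p _ => ?_
      rw [map_sum]
      exact nonnegC_sum _ _ fun q _ => hω (U p q)
    -- apply complete positivity of ip₁
    have heq : Ω₂ (star Y * Y)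
        = Ω₁ (Matrix.of fun p q => ip₁ (x₁' p) (x₁' q)) := by
      rw [hΩ₂app, hΩ₁app]
      refine congrArg ω ?_
      ext α β
      simp only [Matrix.of_apply]
      exact Finset.sum_congr rfl fun i _ => Finset.sum_congr rfl fun j _ => by
        rw [hx₁, hx₁]
    rw [heq]
    exact cp₁ (n * N) x₁' Ω₁ key₁
  -- apply complete positivity of ip₂
  have hgoal : ω (Matrix.of fun α β =>
      ∑ i, ∑ j, ip₁ (x₁ α i) (x₁ β j) ⊗ₜ[C] ip₂ (x₂ α i) (x₂ β j))
      = Ω₂ (Matrix.of fun p q => ip₂ (x₂' p) (x₂' q)) := by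
    rw [hΩ₂app]
    refine congrArg ω ?_
    ext α β
    simp only [Matrix.of_apply]
    exact Finset.sum_congr rfl fun i _ => Finset.sum_congr rfl fun j _ => by
      rw [hx₂, hx₂]
  rw [hgoal]
  exact cp₂ (n * N) x₂' Ω₂ key₂
end

section
/- Let 𝒜 be a unital *-algebra satisfying: for all n and all A ∈ Mₙ(𝒜), 1 + A*A is invertible. Then every idempotent e = e² ∈ Mₙ(𝒜) is equivalent to a projection: there exists P ∈ Mₙ(𝒜) with P = P² = P* and invertible elements relating e and P, i.e., eMₙ(𝒜)ᵏ ≅ PMₙ(𝒜)ᵏ as right modules (equivalently, e = uPu⁻¹ for some invertible u, or e and P are similar). -/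
lemma kap_aux {R : Type*} [Ring R] [StarRing R] (e : R) (he : e * e = e)
    (hu : IsUnit (1 + star (e - star e) * (e - star e))) :
    ∃ (P : R) (u : Rˣ), P * P = P ∧ star P = P ∧ e = u.val * P * u.inv := by
  set f : R := star e with hfdef
  have hf : f * f = f := by rw [hfdef, ← star_mul, he]
  obtain ⟨w, hw⟩ := hu
  have hw' : (w : R) = 1 + (f - e) * (e - f) := by
    rw [hw]; congr 2; simp [hfdef]
  have he' : ∀ x : R, e * (e * x) = e * x := fun x => by rw [← mul_assoc, he]
  have hf' : ∀ x : R, f * (f * x) = f * x := fun x => by rw [← mul_assoc, hf]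
  have h1 : e * (w : R) = e * (f * e) := by
    simp only [hw', mul_add, add_mul, mul_sub, sub_mul, mul_one, one_mul, mul_assoc, he, hf,
      he', hf']
    abel
  have h2 : (w : R) * e = e * (f * e) := by
    simp only [hw', mul_add, add_mul, mul_sub, sub_mul, mul_one, one_mul, mul_assoc, he, hf,
      he', hf']
    abel
  have h4 : (w : R) * f = f * (e * f) := by
    simp only [hw', mul_add, add_mul, mul_sub, sub_mul, mul_one, one_mul, mul_assoc, he, hf,
      he', hf']
    abel
  have h3 : f * (w : R) = f * (e * f) := by
    simp only [hw', mul_add, add_mul, mul_sub, sub_mul, mul_one, one_mul, mul_assoc, he, hf,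
      he', hf']
    abel
  have hstarw : star (w : R) = (w : R) := by
    simp only [hw', hfdef, star_add, star_one, star_mul, star_sub, star_star]
  -- the inverse of w
  set v : R := ((w⁻¹ : Rˣ) : R) with hvdef
  have hwv : (w : R) * v = 1 := w.mul_inv
  have hvw : v * (w : R) = 1 := w.inv_mul
  have hve : v * e = e * v := by
    have hc : Commute (w : R) e := h2.trans h1.symm
    exact hc.units_inv_left
  have hvf : v * f = f * v := by
    have hc : Commute (w : R) f := h4.trans h3.symm
    exact hc.units_inv_left
  have hstarv : star v = v := by
    have h := congrArg star hwv
    rw [star_mul, star_one, hstarw] at h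
    calc star v = star v * ((w : R) * v) := by rw [hwv, mul_one]
      _ = (star v * (w : R)) * v := by rw [mul_assoc]
      _ = v := by rw [h, one_mul]
  set P : R := e * f * v with hPdef
  have hPP : P * P = P := by
    rw [hPdef]
    calc e*f*v*(e*f*v) = e*f*((v*e)*(f*v)) := by simp [mul_assoc]
      _ = e*f*((e*v)*(f*v)) := by rw [hve]
      _ = (e*(f*e))*(v*(f*v)) := by simp [mul_assoc]
      _ = (e*(w : R))*(v*(f*v)) := by rw [← h1]
      _ = e*(((w : R)*v)*(f*v)) := by simp [mul_assoc]
      _ = e*(f*v) := by rw [hwv, one_mul]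
      _ = e*f*v := by simp [mul_assoc]
  have hPe : P * e = e := by
    rw [hPdef]
    calc e*f*v*e = e*f*(v*e) := by simp [mul_assoc]
      _ = e*f*(e*v) := by rw [hve]
      _ = (e*(f*e))*v := by simp [mul_assoc]
      _ = (e*(w : R))*v := by rw [← h1]
      _ = e*((w : R)*v) := by simp [mul_assoc]
      _ = e := by rw [hwv, mul_one]
  have heP : e * P = P := by
    rw [hPdef]
    calc e*(e*f*v) = (e*e)*(f*v) := by simp [mul_assoc]
      _ = e*(f*v) := by rw [he]
      _ = e*f*v := by simp [mul_assoc]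
  have hstarP : star P = P := by
    rw [hPdef]
    calc star (e*f*v) = star v * (star f * star e) := by rw [star_mul, star_mul]
      _ = v * (e * f) := by rw [hstarv, hfdef, star_star]
      _ = (v*e)*f := by rw [mul_assoc]
      _ = (e*v)*f := by rw [hve]
      _ = e*(v*f) := by rw [mul_assoc]
      _ = e*(f*v) := by rw [hvf]
      _ = e*f*v := by rw [mul_assoc]
  have huv : (1 + P - e) * (1 + e - P) = 1 := by
    simp only [mul_add, add_mul, mul_sub, sub_mul, one_mul, mul_one, hPP, hPe, heP, he]
    abel
  have hvu : (1 + e - P) * (1 + P - e) = 1 := by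
    simp only [mul_add, add_mul, mul_sub, sub_mul, one_mul, mul_one, hPP, hPe, heP, he]
    abel
  refine ⟨P, ⟨1 + P - e, 1 + e - P, huv, hvu⟩, hPP, hstarP, ?_⟩
  show e = (1 + P - e) * P * (1 + e - P)
  simp only [mul_add, add_mul, mul_sub, sub_mul, one_mul, mul_one, hPP, hPe, heP, he]
  abel


/-- Kaplansky: if `𝒜` is a unital `*`-algebra such that `1 + A*A` is
invertible in every matrix algebra over `𝒜`, then every idempotent `e ∈ Mₙ(𝒜)` is
equivalent (similar) to a projection `P = P² = P*`. -/
theorem stmt_11 {A : Type*} [Ring A] [StarRing A]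
    (hI : ∀ (m : ℕ) (M : Matrix (Fin m) (Fin m) A), IsUnit (1 + star M * M))
    (n : ℕ) (e : Matrix (Fin n) (Fin n) A) (he : e * e = e) :
    ∃ (P : Matrix (Fin n) (Fin n) A) (u : (Matrix (Fin n) (Fin n) A)ˣ),
      P * P = P ∧ star P = P ∧ e = u.val * P * u.inv := by
  exact kap_aux e he (hI n (e - star e))
end
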